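/- In the symplectic vector space (ℝ⁴, ω) with symplectic basis (x₁, x₂, y₁, y₂), let ℓ(θ) = ⟨cos(θ/2)x₁ + sin(θ/2)y₁, cos(θ/2)x₂ + sin(θ/2)y₂⟩ for θ ∈ [0, 2π]. Then the quadratic forms q_{ℓ(θ), ℓ(θ+π)} span a 2-dimensional subspace of S²(ℝ⁴)* as θ varies, each ℓ(θ) is a Lagrangian, and every nonzero form in this 2-plane is ω-regular (positive definite on some Lagrangian and negative definite on some Lagrangian). -/

import Mathlib

open Matrix
open scoped Classical

/-- `ℝ^{2n}` split as `x`-coordinates and `y`-coordinates of a symplectic basis. -/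
abbrev SympV (n : ℕ) := (Fin n → ℝ) × (Fin n → ℝ)

/-- The standard symplectic form `ω = Σ xᵢ* ∧ yᵢ*`. -/
noncomputable def omg {n : ℕ} (v w : SympV n) : ℝ := v.1 ⬝ᵥ w.2 - w.1 ⬝ᵥ v.2

/-- A Lagrangian subspace: `n`-dimensional and isotropic for `ω`. -/
def IsLagrangian {n : ℕ} (ℓ : Submodule ℝ (SympV n)) : Prop :=
  Module.finrank ℝ ℓ = n ∧ ∀ v ∈ ℓ, ∀ w ∈ ℓ, omg v w = 0

/-- The quadratic form `q_{ℓ,ℓ'}(v) = ω(π(v), π'(v))` associated to a pair of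
complementary subspaces (`π, π'` the projections of the splitting `ℓ ⊕ ℓ'`);
junk value `0` if the subspaces are not complementary. -/
noncomputable def qPair {n : ℕ} (ℓ ℓ' : Submodule ℝ (SympV n)) (v : SympV n) : ℝ :=
  if h : IsCompl ℓ ℓ' then
    omg (ℓ.linearProjOfIsCompl ℓ' h v : SympV n)
      (v - (ℓ.linearProjOfIsCompl ℓ' h v : SympV n))
  else 0

/-- The family of Lagrangians `ℓ(θ) = ⟨cos(θ/2)x₁ + sin(θ/2)y₁,
cos(θ/2)x₂ + sin(θ/2)y₂⟩` in `(ℝ⁴, ω)`. -/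
noncomputable def ellTheta (θ : ℝ) : Submodule ℝ (SympV 2) :=
  Submodule.span ℝ
    {(Real.cos (θ / 2) • (Pi.single 0 1 : Fin 2 → ℝ),
        Real.sin (θ / 2) • (Pi.single 0 1 : Fin 2 → ℝ)),
      (Real.cos (θ / 2) • (Pi.single 1 1 : Fin 2 → ℝ),
        Real.sin (θ / 2) • (Pi.single 1 1 : Fin 2 → ℝ))}

/-! ### Auxiliary material -/

/-- The basis vector `(p x_i, q y_i)` of the line family. -/
noncomputable def eV (p q : ℝ) (i : Fin 2) : SympV 2 :=
  (p • (Pi.single i 1 : Fin 2 → ℝ), q • (Pi.single i 1 : Fin 2 → ℝ))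

/-- The plane `⟨p x₁ + q y₁, p x₂ + q y₂⟩`. -/
noncomputable def ellLine (p q : ℝ) : Submodule ℝ (SympV 2) :=
  Submodule.span ℝ {eV p q 0, eV p q 1}

lemma ellTheta_eq (θ : ℝ) :
    ellTheta θ = ellLine (Real.cos (θ / 2)) (Real.sin (θ / 2)) := rfl

lemma ellTheta_add_pi (θ : ℝ) :
    ellTheta (θ + Real.pi) = ellLine (-Real.sin (θ / 2)) (Real.cos (θ / 2)) := by
  rw [ellTheta_eq, show (θ + Real.pi) / 2 = θ / 2 + Real.pi / 2 by ring,
    Real.cos_add_pi_div_two, Real.sin_add_pi_div_two]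

lemma mem_ellLine {p q : ℝ} {v : SympV 2} :
    v ∈ ellLine p q ↔ ∃ a b : ℝ, a • eV p q 0 + b • eV p q 1 = v :=
  Submodule.mem_span_pair

@[simp] lemma eV_fst_apply (p q : ℝ) (i j : Fin 2) :
    (eV p q i).1 j = if i = j then p else 0 := by
  rcases eq_or_ne i j with h | h
  · subst h; simp [eV]
  · simp [eV, Pi.single_apply, h, Ne.symm h]

@[simp] lemma eV_snd_apply (p q : ℝ) (i j : Fin 2) :
    (eV p q i).2 j = if i = j then q else 0 := by
  rcases eq_or_ne i j with h | h
  · subst h; simp [eV]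
  · simp [eV, Pi.single_apply, h, Ne.symm h]

lemma comb_fst (p q a b : ℝ) (j : Fin 2) :
    (a • eV p q 0 + b • eV p q 1).1 j = (if (0:Fin 2) = j then a*p else 0) +
      (if (1:Fin 2) = j then b*p else 0) := by
  simp only [Prod.fst_add, Prod.smul_fst, Pi.add_apply, Pi.smul_apply, smul_eq_mul,
    eV_fst_apply, mul_ite, mul_zero]

lemma comb_snd (p q a b : ℝ) (j : Fin 2) :
    (a • eV p q 0 + b • eV p q 1).2 j = (if (0:Fin 2) = j then a*q else 0) +
      (if (1:Fin 2) = j then b*q else 0) := by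
  simp only [Prod.snd_add, Prod.smul_snd, Pi.add_apply, Pi.smul_apply, smul_eq_mul,
    eV_snd_apply, mul_ite, mul_zero]

lemma ellLine_indep {p q : ℝ} (h : p ≠ 0 ∨ q ≠ 0) :
    LinearIndependent ℝ ![eV p q 0, eV p q 1] := by
  rw [LinearIndependent.pair_iff]
  intro s t hst
  have h10 := congrFun (congrArg Prod.fst hst) 0
  have h11 := congrFun (congrArg Prod.fst hst) 1
  have h20 := congrFun (congrArg Prod.snd hst) 0
  have h21 := congrFun (congrArg Prod.snd hst) 1
  rw [comb_fst] at h10 h11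
  rw [comb_snd] at h20 h21
  simp at h10 h11 h20 h21
  rcases h with h | h
  · exact ⟨by rcases h10 with h'|h'; exact h' ; exact absurd h' h,
      by rcases h11 with h'|h'; exact h'; exact absurd h' h⟩
  · exact ⟨by rcases h20 with h'|h'; exact h'; exact absurd h' h,
      by rcases h21 with h'|h'; exact h'; exact absurd h' h⟩

lemma ellLine_lagrangian {p q : ℝ} (h : p ≠ 0 ∨ q ≠ 0) :
    IsLagrangian (ellLine p q) := by
  constructor
  · have hr : ({eV p q 0, eV p q 1} : Set (SympV 2)) = Set.range ![eV p q 0, eV p q 1] := by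
      simp only [Matrix.range_cons, Matrix.range_empty, Set.union_empty,
        Set.union_singleton, Set.singleton_union]
      exact Set.pair_comm _ _
    rw [ellLine, hr, finrank_span_eq_card (ellLine_indep h)]
    simp
  · intro v hv w hw
    obtain ⟨a, b, rfl⟩ := mem_ellLine.mp hv
    obtain ⟨a', b', rfl⟩ := mem_ellLine.mp hw
    simp only [omg, dotProduct, Fin.sum_univ_two, comb_fst, comb_snd]
    norm_num
    ring

lemma ellLine_isCompl {p q p' q' : ℝ} (h : p * q' - q * p' ≠ 0) :
    IsCompl (ellLine p q) (ellLine p' q') := by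
  constructor
  · rw [Submodule.disjoint_def]
    intro v hv hv'
    obtain ⟨a, b, rfl⟩ := mem_ellLine.mp hv
    obtain ⟨a', b', hv'⟩ := mem_ellLine.mp hv'
    have h10 := congrFun (congrArg Prod.fst hv') 0
    have h11 := congrFun (congrArg Prod.fst hv') 1
    have h20 := congrFun (congrArg Prod.snd hv') 0
    have h21 := congrFun (congrArg Prod.snd hv') 1
    rw [comb_fst, comb_fst] at h10 h11
    rw [comb_snd, comb_snd] at h20 h21
    simp at h10 h11 h20 h21
    have ha : a = 0 := by
      have : a * (p * q' - q * p') = 0 := by linear_combination (-q') * h10 + p' * h20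
      rcases mul_eq_zero.mp this with h' | h'
      · exact h'
      · exact absurd h' h
    have hb : b = 0 := by
      have : b * (p * q' - q * p') = 0 := by linear_combination (-q') * h11 + p' * h21
      rcases mul_eq_zero.mp this with h' | h'
      · exact h'
      · exact absurd h' h
    simp [ha, hb]
  · rw [codisjoint_iff, eq_top_iff]
    intro v _
    set d := p * q' - q * p'
    have hv : v = ((q' * v.1 0 - p' * v.2 0)/d) • eV p q 0
        + ((q' * v.1 1 - p' * v.2 1)/d) • eV p q 1
        + (((- q) * v.1 0 + p * v.2 0)/d) • eV p' q' 0
        + (((- q) * v.1 1 + p * v.2 1)/d) • eV p' q' 1 := by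
      apply Prod.ext <;> funext j <;> fin_cases j <;>
        simp [Prod.fst_add, Prod.snd_add, Prod.smul_fst, Prod.smul_snd] <;>
        field_simp <;> ring
    rw [hv]
    have m1 : eV p q 0 ∈ ellLine p q ⊔ ellLine p' q' :=
      Submodule.mem_sup_left (Submodule.subset_span (by simp))
    have m2 : eV p q 1 ∈ ellLine p q ⊔ ellLine p' q' :=
      Submodule.mem_sup_left (Submodule.subset_span (by simp))
    have m3 : eV p' q' 0 ∈ ellLine p q ⊔ ellLine p' q' :=
      Submodule.mem_sup_right (Submodule.subset_span (by simp))
    have m4 : eV p' q' 1 ∈ ellLine p q ⊔ ellLine p' q' :=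
      Submodule.mem_sup_right (Submodule.subset_span (by simp))
    exact Submodule.add_mem _ (Submodule.add_mem _ (Submodule.add_mem _
      (Submodule.smul_mem _ _ m1) (Submodule.smul_mem _ _ m2))
      (Submodule.smul_mem _ _ m3)) (Submodule.smul_mem _ _ m4)

lemma isCompl_theta (θ : ℝ) : IsCompl (ellTheta θ) (ellTheta (θ + Real.pi)) := by
  rw [ellTheta_eq, ellTheta_add_pi]
  apply ellLine_isCompl
  have := Real.sin_sq_add_cos_sq (θ / 2)
  nlinarith [this]

/-- The two basic quadratic forms. -/
noncomputable def QA : SympV 2 → ℝ := fun v => (v.2 0^2 - v.1 0^2 + v.2 1^2 - v.1 1^2)/2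
noncomputable def QB : SympV 2 → ℝ := fun v => v.1 0 * v.2 0 + v.1 1 * v.2 1

lemma qPair_theta (θ : ℝ) :
    qPair (ellTheta θ) (ellTheta (θ + Real.pi)) = Real.sin θ • QA + Real.cos θ • QB := by
  funext v
  set c := Real.cos (θ / 2) with hc
  set s := Real.sin (θ / 2) with hs
  have hpy : s^2 + c^2 = 1 := Real.sin_sq_add_cos_sq (θ / 2)
  have h := isCompl_theta θ
  rw [qPair, dif_pos h]
  -- explicit decomposition
  set w : SympV 2 := (c * v.1 0 + s * v.2 0) • eV c s 0 + (c * v.1 1 + s * v.2 1) • eV c s 1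
    with hw
  set z : SympV 2 := (-s * v.1 0 + c * v.2 0) • eV (-s) c 0
    + (-s * v.1 1 + c * v.2 1) • eV (-s) c 1 with hz
  have hv : v = w + z := by
    apply Prod.ext <;> funext j <;> fin_cases j <;>
      simp [hw, hz, Prod.fst_add, Prod.snd_add, comb_fst, comb_snd] <;>
      first
        | linear_combination (-(v.1 0)) * hpy
        | linear_combination (-(v.1 1)) * hpy
        | linear_combination (-(v.2 0)) * hpy
        | linear_combination (-(v.2 1)) * hpy
  have hwmem : w ∈ ellTheta θ := by
    rw [ellTheta_eq]; exact mem_ellLine.mpr ⟨_, _, rfl⟩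
  have hzmem : z ∈ ellTheta (θ + Real.pi) := by
    rw [ellTheta_add_pi]; exact mem_ellLine.mpr ⟨_, _, rfl⟩
  have hproj : ((ellTheta θ).linearProjOfIsCompl _ h v : SympV 2) = w := by
    conv_lhs => rw [hv]
    rw [map_add, Submodule.linearProjOfIsCompl, Submodule.linearProjOfIsCompl_apply_right' h hzmem, add_zero]
    exact congrArg Subtype.val (Submodule.linearProjOfIsCompl_apply_left h ⟨w, hwmem⟩)
  have hvz : v - w = z := by rw [hv]; abel
  rw [hproj, hvz]
  have hsin : Real.sin θ = 2 * s * c := by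
    rw [hs, hc, ← Real.sin_two_mul]; congr 1; ring
  have hcos : Real.cos θ = 2 * c^2 - 1 := by
    rw [hc, ← Real.cos_two_mul]; congr 1; ring
  simp only [omg, dotProduct, Fin.sum_univ_two, Pi.add_apply, Pi.smul_apply, smul_eq_mul,
    QA, QB, hw, hz, comb_fst, comb_snd]
  norm_num
  rw [hsin, hcos]
  linear_combination (s * c * (v.2 0^2 - v.1 0^2 + v.2 1^2 - v.1 1^2) +
    (v.1 0 * v.2 0 + v.1 1 * v.2 1) * (c^2 - s^2 - 1)) * hpy

lemma span_range_eq :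
    Submodule.span ℝ (Set.range fun θ : ℝ =>
        (qPair (ellTheta θ) (ellTheta (θ + Real.pi)) : SympV 2 → ℝ)) =
      Submodule.span ℝ ({QA, QB} : Set (SympV 2 → ℝ)) := by
  apply le_antisymm
  · rw [Submodule.span_le]
    rintro _ ⟨θ, rfl⟩
    simp only [qPair_theta]
    exact Submodule.mem_span_pair.mpr ⟨_, _, rfl⟩
  · rw [Submodule.span_le]
    rintro F hF
    rcases hF with h | h
    · subst h
      apply Submodule.subset_span
      exact ⟨Real.pi / 2, by simp only [qPair_theta]; simp⟩
    · simp only [Set.mem_singleton_iff] at h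
      subst h
      apply Submodule.subset_span
      exact ⟨0, by simp only [qPair_theta]; simp⟩

noncomputable def v₁ : SympV 2 := (![0,0], ![1,0])
noncomputable def v₂ : SympV 2 := (![1,0], ![1,0])

lemma QAQB_indep : LinearIndependent ℝ ![QA, QB] := by
  rw [LinearIndependent.pair_iff]
  intro s t hst
  have h1 := congrFun hst v₁
  have h2 := congrFun hst v₂
  simp [QA, QB, v₁, v₂] at h1 h2
  constructor <;> linarith

lemma quad_on_line (α β p q a b : ℝ) :
    (α • QA + β • QB) (a • eV p q 0 + b • eV p q 1) =
      (a^2 + b^2) * (α * (q^2 - p^2)/2 + β * (p*q)) := by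
  simp only [Pi.add_apply, Pi.smul_apply, smul_eq_mul, QA, QB, comb_fst, comb_snd]
  norm_num
  ring

lemma exists_pos_line (α β : ℝ) (h : ¬(α = 0 ∧ β = 0)) :
    ∃ p q : ℝ, (p ≠ 0 ∨ q ≠ 0) ∧ 0 < α * (q^2 - p^2)/2 + β * (p*q) := by
  rcases lt_trichotomy α 0 with hα | hα | hα
  · exact ⟨1, 0, Or.inl one_ne_zero, by norm_num; linarith⟩
  · have hβ : β ≠ 0 := fun hβ => h ⟨hα, hβ⟩
    rcases hβ.lt_or_gt with hβ | hβ
    · exact ⟨1, -1, Or.inl one_ne_zero, by rw [hα]; norm_num; linarith⟩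
    · exact ⟨1, 1, Or.inl one_ne_zero, by rw [hα]; norm_num; linarith⟩
  · exact ⟨0, 1, Or.inr one_ne_zero, by norm_num; linarith⟩

lemma line_pos (α β p q : ℝ) (hpq : p ≠ 0 ∨ q ≠ 0)
    (hg : 0 < α * (q^2 - p^2)/2 + β * (p*q)) :
    ∀ v ∈ ellLine p q, v ≠ 0 → 0 < (α • QA + β • QB) v := by
  intro v hv hv0
  obtain ⟨a, b, rfl⟩ := mem_ellLine.mp hv
  have hab : a ≠ 0 ∨ b ≠ 0 := by
    by_contra hab
    push_neg at hab
    exact hv0 (by simp [hab.1, hab.2])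
  rw [quad_on_line]
  have : 0 < a^2 + b^2 := by
    rcases hab with h | h <;> positivity
  positivity

/-- Each `ℓ(θ)` is a Lagrangian transverse to `ℓ(θ+π)`, the quadratic
forms `q_{ℓ(θ), ℓ(θ+π)}` span a 2-dimensional space of quadrics as `θ` varies, and
every nonzero form in this 2-plane is ω-regular (positive definite on some
Lagrangian and negative definite on some Lagrangian). -/
theorem pencil_of_spacelike_plane_omega_regular :
    (∀ θ : ℝ, IsLagrangian (ellTheta θ)) ∧
    (∀ θ : ℝ, IsCompl (ellTheta θ) (ellTheta (θ + Real.pi))) ∧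
    (Module.finrank ℝ (Submodule.span ℝ
        (Set.range fun θ : ℝ => (qPair (ellTheta θ) (ellTheta (θ + Real.pi)) :
          SympV 2 → ℝ))) = 2) ∧
    (∀ F ∈ Submodule.span ℝ
        (Set.range fun θ : ℝ => (qPair (ellTheta θ) (ellTheta (θ + Real.pi)) :
          SympV 2 → ℝ)), F ≠ 0 →
      (∃ ℓ : Submodule ℝ (SympV 2), IsLagrangian ℓ ∧
          ∀ v ∈ ℓ, v ≠ 0 → 0 < F v) ∧
      (∃ ℓ : Submodule ℝ (SympV 2), IsLagrangian ℓ ∧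
          ∀ v ∈ ℓ, v ≠ 0 → F v < 0)) := by
  have hcs : ∀ θ : ℝ, Real.cos (θ/2) ≠ 0 ∨ Real.sin (θ/2) ≠ 0 := by
    intro θ
    by_contra hx
    push_neg at hx
    have := Real.sin_sq_add_cos_sq (θ / 2)
    rw [hx.1, hx.2] at this
    norm_num at this
  refine ⟨fun θ => by rw [ellTheta_eq]; exact ellLine_lagrangian (hcs θ),
    isCompl_theta, ?_, ?_⟩
  · rw [span_range_eq]
    have hr : ({QA, QB} : Set (SympV 2 → ℝ)) = Set.range ![QA, QB] := by
      simp only [Matrix.range_cons, Matrix.range_empty, Set.union_empty,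
        Set.union_singleton, Set.singleton_union]
      exact Set.pair_comm _ _
    rw [hr, finrank_span_eq_card QAQB_indep]
    simp
  · intro F hF hF0
    rw [span_range_eq] at hF
    obtain ⟨α, β, hαβ⟩ := Submodule.mem_span_pair.mp hF
    have hne : ¬(α = 0 ∧ β = 0) := by
      rintro ⟨rfl, rfl⟩
      apply hF0
      rw [← hαβ]; simp
    constructor
    · obtain ⟨p, q, hpq, hg⟩ := exists_pos_line α β hne
      refine ⟨ellLine p q, ellLine_lagrangian hpq, ?_⟩
      rw [← hαβ]
      exact line_pos α β p q hpq hg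
    · have hne' : ¬(-α = 0 ∧ -β = 0) := by
        rintro ⟨h1, h2⟩
        exact hne ⟨neg_eq_zero.mp h1, neg_eq_zero.mp h2⟩
      obtain ⟨p, q, hpq, hg⟩ := exists_pos_line (-α) (-β) hne'
      refine ⟨ellLine p q, ellLine_lagrangian hpq, fun v hv hv0 => ?_⟩
      have := line_pos (-α) (-β) p q hpq hg v hv hv0
      have hFv : F v = α * QA v + β * QB v := by
        rw [← hαβ]; simp
      simp only [Pi.add_apply, Pi.smul_apply, smul_eq_mul] at this
      linarith [this, hFv.ge]
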